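/- Assume 1 − AC ≤ 0. The equilibrium points of the system in the closed first quadrant {(x,y) : x ≥ 0, y ≥ 0} are exactly the three points E₀ = (0,0), E₁ = (0,C), and E₂ = (1,0); in particular there is no equilibrium in the open first quadrant {x > 0, y > 0}. -/
import Mathlib


/-- When `1 − AC ≤ 0`, the equilibria of `ẋ = x(C+x)(1−x−Ay)`,
`ẏ = B·y·(C+x−y)` in the closed first quadrant are exactly
`(0,0)`, `(0,C)` and `(1,0)`; in particular there is no equilibrium in the
open first quadrant. -/
theorem stmt_9 (A B C : ℝ) (hA : 0 < A) (hB : 0 < B) (hC : 0 < C)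
    (hAC : 1 - A * C ≤ 0) :
    (∀ x y : ℝ, 0 ≤ x → 0 ≤ y →
      ((x * (C + x) * (1 - x - A * y) = 0 ∧ B * y * (C + x - y) = 0) ↔
        ((x, y) = ((0 : ℝ), (0 : ℝ)) ∨ (x, y) = ((0 : ℝ), C) ∨
          (x, y) = ((1 : ℝ), (0 : ℝ))))) ∧
    (∀ x y : ℝ, 0 < x → 0 < y →
      ¬ (x * (C + x) * (1 - x - A * y) = 0 ∧ B * y * (C + x - y) = 0)) := by
  have main : ∀ x y : ℝ, 0 ≤ x → 0 ≤ y →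
      ((x * (C + x) * (1 - x - A * y) = 0 ∧ B * y * (C + x - y) = 0) ↔
        ((x, y) = ((0 : ℝ), (0 : ℝ)) ∨ (x, y) = ((0 : ℝ), C) ∨
          (x, y) = ((1 : ℝ), (0 : ℝ)))) := by
    intro x y hx hy
    constructor
    · rintro ⟨h1, h2⟩
      have hCx : 0 < C + x := by linarith
      have h1' : x = 0 ∨ 1 - x - A * y = 0 := by
        rcases mul_eq_zero.mp h1 with h | h
        · rcases mul_eq_zero.mp h with h | h
          · exact Or.inl h
          · exact absurd h (by linarith)
        · exact Or.inr h
      have h2' : y = 0 ∨ C + x - y = 0 := by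
        rcases mul_eq_zero.mp h2 with h | h
        · rcases mul_eq_zero.mp h with h | h
          · exact absurd h (by linarith)
          · exact Or.inl h
        · exact Or.inr h
      rcases h1' with hx0 | hline
      · subst hx0
        rcases h2' with hy0 | hyc
        · left; simp [hy0]
        · right; left
          have : y = C := by linarith
          simp [this]
      · rcases h2' with hy0 | hyc
        · subst hy0
          have : x = 1 := by linarith
          right; right; simp [this]
        · have hAy : A * (C + x - y) = 0 := by rw [hyc]; ring
          have hAy' : A * C + A * x - A * y = 0 := by linarith [hAy]; 
          have hx0 : x = 0 := by
            have hax : 0 ≤ A * x := mul_nonneg hA.le hx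
            nlinarith
          subst hx0
          have : y = C := by linarith
          right; left; simp [this]
    · rintro (h | h | h) <;>
        (obtain ⟨h1, h2⟩ := Prod.mk.injEq .. ▸ h; cases h1; cases h2) <;>
        constructor <;> ring
  refine ⟨main, ?_⟩
  intro x y hx hy h
  rcases (main x y hx.le hy.le).mp h with h' | h' | h' <;>
    simp only [Prod.mk.injEq] at h' <;> [skip; skip; skip] <;>
    obtain ⟨e1, e2⟩ := h' <;> subst e1 <;> subst e2 <;> linarith
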